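/- arXiv:1309.4044 — 4 statements merged into one kernel-verified Lean document; each statement's English description precedes it below -/
import Mathlib

section
/- Let G be a finite set of nonzero polynomials in ℚ[x₁,...,xₙ] with a fixed monomial order. If the S-polynomial of every pair of elements of G reduces to 0 modulo G, then G is a Gröbner basis of the ideal it generates (Buchberger's criterion). -/
open MvPolynomial
open scoped MonomialOrder

namespace ModularGB

variable {σ : Type*}

/-- The leading exponent (multidegree) of `f` with respect to the monomial order `m`. -/
noncomputable def mdeg {R : Type*} [CommSemiring R] (m : MonomialOrder σ)
    (f : MvPolynomial σ R) : σ →₀ ℕ :=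
  m.toSyn.symm (f.support.sup fun d => m.toSyn d)

/-- The leading coefficient of `f`. -/
noncomputable def leadCoeff {R : Type*} [CommSemiring R] (m : MonomialOrder σ)
    (f : MvPolynomial σ R) : R :=
  f.coeff (mdeg m f)

/-- The leading term of `f`. -/
noncomputable def leadTerm {R : Type*} [CommSemiring R] (m : MonomialOrder σ)
    (f : MvPolynomial σ R) : MvPolynomial σ R :=
  monomial (mdeg m f) (leadCoeff m f)

/-- `f` reduces to zero upon division by the finite family `G`:
it has a standard representation `f = ∑ qᵢ Gᵢ` with `mdeg (qᵢ Gᵢ) ≼ mdeg f`. -/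
def RedZero {R : Type*} [CommSemiring R] (m : MonomialOrder σ) {ι : Type*} [Fintype ι]
    (G : ι → MvPolynomial σ R) (f : MvPolynomial σ R) : Prop :=
  ∃ q : ι → MvPolynomial σ R,
    f = ∑ i, q i * G i ∧ ∀ i, mdeg m (q i * G i) ≼[m] mdeg m f

/-- The S-polynomial of `f` and `g`. -/
noncomputable def sPoly (m : MonomialOrder σ) {K : Type*} [Field K]
    (f g : MvPolynomial σ K) : MvPolynomial σ K :=
  monomial (mdeg m f ⊔ mdeg m g - mdeg m f) (leadCoeff m f)⁻¹ * f
    - monomial (mdeg m f ⊔ mdeg m g - mdeg m g) (leadCoeff m g)⁻¹ * g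

/-- The leading-term ideal of an ideal `I`. -/
noncomputable def LTIdeal {R : Type*} [CommSemiring R] (m : MonomialOrder σ)
    (I : Ideal (MvPolynomial σ R)) : Ideal (MvPolynomial σ R) :=
  Ideal.span (leadTerm m '' {f | f ∈ I ∧ f ≠ 0})

/-- The family `G` is a Gröbner basis of `I`. -/
def IsGroebner {R : Type*} [CommSemiring R] (m : MonomialOrder σ) {ι : Type*}
    (G : ι → MvPolynomial σ R) (I : Ideal (MvPolynomial σ R)) : Prop :=
  (∀ i, G i ∈ I) ∧ Ideal.span (Set.range fun i => leadTerm m (G i)) = LTIdeal m I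

end ModularGB


namespace BuchAux

open ModularGB

variable {σ : Type*} (m : MonomialOrder σ)

/-- degree in the synonym type -/
noncomputable abbrev D (f : MvPolynomial σ ℚ) : m.syn := m.toSyn (mdeg m f)

lemma D_eq_sup (f : MvPolynomial σ ℚ) : D m f = f.support.sup fun d => m.toSyn d := by
  simp [D, mdeg]

variable {m}

lemma le_D_of_mem {f : MvPolynomial σ ℚ} {d : σ →₀ ℕ} (h : d ∈ f.support) :
    m.toSyn d ≤ D m f := by
  rw [D_eq_sup]; exact Finset.le_sup h

lemma le_D_of_coeff_ne_zero {f : MvPolynomial σ ℚ} {d : σ →₀ ℕ} (h : f.coeff d ≠ 0) :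
    m.toSyn d ≤ D m f :=
  le_D_of_mem (by simpa [MvPolynomial.mem_support_iff] using h)

lemma coeff_eq_zero_of_D_lt {f : MvPolynomial σ ℚ} {d : σ →₀ ℕ} (h : D m f < m.toSyn d) :
    f.coeff d = 0 := by
  by_contra hc
  exact absurd (le_D_of_coeff_ne_zero hc) (not_le.mpr h)

@[simp] lemma mdeg_zero : mdeg m (0 : MvPolynomial σ ℚ) = 0 := by
  simp [mdeg]

@[simp] lemma D_zero : D m (0 : MvPolynomial σ ℚ) = 0 := by
  simp [D]

lemma mdeg_mem_support {f : MvPolynomial σ ℚ} (hf : f ≠ 0) : mdeg m f ∈ f.support := by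
  obtain ⟨d, hd, hds⟩ := f.support.exists_mem_eq_sup
    (by simpa [MvPolynomial.support_eq_empty] using hf) fun d => m.toSyn d
  have : mdeg m f = d := by rw [mdeg, hds, AddEquiv.symm_apply_apply]
  rwa [this]

lemma leadCoeff_ne_zero {f : MvPolynomial σ ℚ} (hf : f ≠ 0) : leadCoeff m f ≠ 0 := by
  have := mdeg_mem_support (m := m) hf
  simpa [leadCoeff, MvPolynomial.mem_support_iff] using this

lemma D_le_of_forall {f : MvPolynomial σ ℚ} {b : m.syn}
    (h : ∀ d ∈ f.support, m.toSyn d ≤ b) : D m f ≤ b := by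
  rw [D_eq_sup]; exact Finset.sup_le h

lemma D_lt_of_forall {f : MvPolynomial σ ℚ} {b : m.syn} (hb : 0 < b)
    (h : ∀ d ∈ f.support, m.toSyn d < b) : D m f < b := by
  rw [D_eq_sup]
  exact Finset.sup_lt_iff (by simpa using hb) |>.mpr h

lemma D_mul_le (f g : MvPolynomial σ ℚ) : D m (f * g) ≤ D m f + D m g := by
  classical
  apply D_le_of_forall
  intro d hd
  obtain ⟨a, ha, b, hb, rfl⟩ := Finset.mem_add.mp (MvPolynomial.support_mul f g hd)
  rw [map_add]
  exact add_le_add (le_D_of_mem ha) (le_D_of_mem hb)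

lemma D_sum_le {ι : Type*} (s : Finset ι) (f : ι → MvPolynomial σ ℚ) :
    D m (∑ i ∈ s, f i) ≤ s.sup fun i => D m (f i) := by
  classical
  apply D_le_of_forall
  intro d hd
  obtain ⟨i, hi, hdi⟩ := Finset.mem_biUnion.mp (MvPolynomial.support_sum hd)
  exact le_trans (le_D_of_mem hdi) (Finset.le_sup (f := fun i => D m (f i)) hi)

lemma D_monomial_le (e : σ →₀ ℕ) (c : ℚ) : D m (monomial e c) ≤ m.toSyn e := by
  apply D_le_of_forall
  intro d hd
  rcases eq_or_ne c 0 with rfl | hc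
  · simp at hd
  · rw [MvPolynomial.support_monomial, if_neg hc] at hd
    simp at hd
    exact le_of_eq (by rw [hd])

lemma mdeg_monomial (e : σ →₀ ℕ) {c : ℚ} (hc : c ≠ 0) : mdeg m (monomial e c) = e := by
  rw [mdeg, MvPolynomial.support_monomial, if_neg hc]
  simp

lemma coeff_mul_mdeg_add_mdeg [DecidableEq σ] (f g : MvPolynomial σ ℚ) :
    (f * g).coeff (mdeg m f + mdeg m g) = leadCoeff m f * leadCoeff m g := by
  rw [MvPolynomial.coeff_mul]
  have hmem : ((mdeg m f, mdeg m g) : (σ →₀ ℕ) × (σ →₀ ℕ))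
      ∈ Finset.HasAntidiagonal.antidiagonal (mdeg m f + mdeg m g) := by
    rw [Finset.HasAntidiagonal.mem_antidiagonal]
  rw [Finset.sum_eq_single_of_mem _ hmem]
  · rfl
  · rintro ⟨a, b⟩ hab hne
    rw [Finset.HasAntidiagonal.mem_antidiagonal] at hab
    by_cases ha : f.coeff a = 0
    · simp [ha]
    by_cases hb : g.coeff b = 0
    · simp [hb]
    exfalso
    have h1 : m.toSyn a ≤ D m f := le_D_of_coeff_ne_zero ha
    have h2 : m.toSyn b ≤ D m g := le_D_of_coeff_ne_zero hb
    have hsum : m.toSyn a + m.toSyn b = D m f + D m g := by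
      rw [← map_add, hab, map_add]
    have ha' : m.toSyn a = D m f := by
      by_contra h
      exact absurd hsum (ne_of_lt (add_lt_add_of_lt_of_le (lt_of_le_of_ne h1 h) h2))
    have hb' : m.toSyn b = D m g := by
      have := hsum
      rw [ha'] at this
      exact add_left_cancel this
    have : a = mdeg m f := m.toSyn.injective ha'
    have hbb : b = mdeg m g := m.toSyn.injective hb'
    exact hne (by simp [this, hbb, Prod.ext_iff])

lemma mdeg_mul {f g : MvPolynomial σ ℚ} (hf : f ≠ 0) (hg : g ≠ 0) :
    mdeg m (f * g) = mdeg m f + mdeg m g :=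
  m.toSyn.injective (by
    classical
    have hc : (f * g).coeff (mdeg m f + mdeg m g) ≠ 0 := by
      rw [coeff_mul_mdeg_add_mdeg]
      exact mul_ne_zero (leadCoeff_ne_zero hf) (leadCoeff_ne_zero hg)
    have h1 : m.toSyn (mdeg m f + mdeg m g) ≤ D m (f * g) := le_D_of_coeff_ne_zero hc
    have h2 : D m (f * g) ≤ m.toSyn (mdeg m f + mdeg m g) := by
      rw [map_add]; exact D_mul_le f g
    exact le_antisymm h2 h1)


lemma leadCoeff_mul {f g : MvPolynomial σ ℚ} (hf : f ≠ 0) (hg : g ≠ 0) :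
    leadCoeff m (f * g) = leadCoeff m f * leadCoeff m g := by
  classical
  rw [leadCoeff, mdeg_mul hf hg, coeff_mul_mdeg_add_mdeg]

end BuchAux

namespace BuchAux

open ModularGB MvPolynomial

variable {σ : Type*} {m : MonomialOrder σ}

lemma D_add_le (f g : MvPolynomial σ ℚ) : D m (f + g) ≤ max (D m f) (D m g) := by
  classical
  apply D_le_of_forall
  intro d hd
  rcases (Finset.mem_union.mp (Finsupp.support_add hd)) with h | h
  · exact le_max_of_le_left (le_D_of_mem h)
  · exact le_max_of_le_right (le_D_of_mem h)

lemma coeff_sub_leadTerm {f : MvPolynomial σ ℚ} {d : σ →₀ ℕ} (hd : d ≠ mdeg m f) :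
    (f - leadTerm m f).coeff d = f.coeff d := by
  classical
  rw [MvPolynomial.coeff_sub, leadTerm, MvPolynomial.coeff_monomial,
    if_neg (fun h => hd h.symm), sub_zero]

@[simp] lemma coeff_sub_leadTerm_mdeg (f : MvPolynomial σ ℚ) :
    (f - leadTerm m f).coeff (mdeg m f) = 0 := by
  classical
  rw [MvPolynomial.coeff_sub, leadTerm, MvPolynomial.coeff_monomial, if_pos rfl, leadCoeff,
    sub_self]

lemma D_sub_leadTerm_lt {f : MvPolynomial σ ℚ} (h : f - leadTerm m f ≠ 0) :
    D m (f - leadTerm m f) < D m f := by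
  have claim : ∀ d ∈ (f - leadTerm m f).support, m.toSyn d < D m f := by
    intro d hd
    rw [MvPolynomial.mem_support_iff] at hd
    have hne : d ≠ mdeg m f := by
      rintro rfl
      exact hd (coeff_sub_leadTerm_mdeg f)
    have hdf : f.coeff d ≠ 0 := by rwa [coeff_sub_leadTerm hne] at hd
    exact lt_of_le_of_ne (le_D_of_coeff_ne_zero hdf) fun he => hne (m.toSyn.injective he)
  obtain ⟨d₀, hd₀⟩ := (MvPolynomial.support_nonempty).mpr h
  exact D_lt_of_forall (lt_of_le_of_lt bot_le (claim d₀ hd₀)) claim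

lemma D_monomial_mul_le (e : σ →₀ ℕ) (c : ℚ) (f : MvPolynomial σ ℚ) :
    D m (monomial e c * f) ≤ m.toSyn e + D m f :=
  le_trans (D_mul_le _ _) (add_le_add_left (D_monomial_le e c) _)

lemma coeff_sPoly_sup {f g : MvPolynomial σ ℚ} (hf : f ≠ 0) (hg : g ≠ 0) :
    (sPoly m f g).coeff (mdeg m f ⊔ mdeg m g) = 0 := by
  classical
  rw [sPoly, MvPolynomial.coeff_sub, MvPolynomial.coeff_monomial_mul',
    MvPolynomial.coeff_monomial_mul', if_pos tsub_le_self, if_pos tsub_le_self,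
    tsub_tsub_cancel_of_le (le_sup_left : mdeg m f ≤ mdeg m f ⊔ mdeg m g),
    tsub_tsub_cancel_of_le (le_sup_right : mdeg m g ≤ mdeg m f ⊔ mdeg m g)]
  rw [show f.coeff (mdeg m f) = leadCoeff m f from rfl,
    show g.coeff (mdeg m g) = leadCoeff m g from rfl,
    inv_mul_cancel₀ (leadCoeff_ne_zero hf), inv_mul_cancel₀ (leadCoeff_ne_zero hg), sub_self]

lemma D_sPoly_lt {f g : MvPolynomial σ ℚ} (hf : f ≠ 0) (hg : g ≠ 0)
    (hs : sPoly m f g ≠ 0) :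
    D m (sPoly m f g) < m.toSyn (mdeg m f ⊔ mdeg m g) := by
  classical
  have claim : ∀ d ∈ (sPoly m f g).support, m.toSyn d < m.toSyn (mdeg m f ⊔ mdeg m g) := by
    intro d hd
    have hne : d ≠ mdeg m f ⊔ mdeg m g := by
      rintro rfl
      rw [MvPolynomial.mem_support_iff] at hd
      exact hd (coeff_sPoly_sup hf hg)
    have hle : m.toSyn d ≤ m.toSyn (mdeg m f ⊔ mdeg m g) := by
      have hsub := MvPolynomial.support_sub σ _ _ hd
      have key : ∀ (p : MvPolynomial σ ℚ) (e : σ →₀ ℕ), e ≤ mdeg m f ⊔ mdeg m g →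
          mdeg m p ≤ mdeg m f ⊔ mdeg m g → False = False := fun _ _ _ _ => rfl
      rcases Finset.mem_union.mp hsub with h | h
      · refine le_trans (le_D_of_mem h) (le_trans (D_monomial_mul_le _ _ _) ?_)
        rw [← map_add]
        exact m.toSyn_monotone (by
          rw [tsub_add_cancel_of_le (le_sup_left : mdeg m f ≤ mdeg m f ⊔ mdeg m g)])
      · refine le_trans (le_D_of_mem h) (le_trans (D_monomial_mul_le _ _ _) ?_)
        rw [← map_add]
        exact m.toSyn_monotone (by
          rw [tsub_add_cancel_of_le (le_sup_right : mdeg m g ≤ mdeg m f ⊔ mdeg m g)])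
    exact lt_of_le_of_ne hle fun he => hne (m.toSyn.injective he)
  obtain ⟨d₀, hd₀⟩ := (MvPolynomial.support_nonempty).mpr hs
  exact D_lt_of_forall (lt_of_le_of_lt bot_le (claim d₀ hd₀)) claim

end BuchAux

namespace BuchAux

open ModularGB MvPolynomial
open scoped MonomialOrder

variable {σ : Type*} {m : MonomialOrder σ} {k : ℕ}

set_option maxHeartbeats 1000000 in
lemma redZero_of_mem (G : Fin k → MvPolynomial σ ℚ) (hG : ∀ i, G i ≠ 0)
    (hS : ∀ i j, RedZero m G (sPoly m (G i) (G j)))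
    (f : MvPolynomial σ ℚ) (hf : f ∈ Ideal.span (Set.range G)) :
    RedZero m G f := by
  classical
  obtain ⟨q0, hq0⟩ := Ideal.mem_span_range_iff_exists_fun.mp hf
  set S : Set m.syn :=
    {b | ∃ q : Fin k → MvPolynomial σ ℚ, f = ∑ i, q i * G i ∧
      (Finset.univ.sup fun i => D m (q i * G i)) = b} with hS_def
  have hSne : S.Nonempty := ⟨_, q0, hq0.symm, rfl⟩
  obtain ⟨b₀, hb₀S, hmin⟩ := (wellFounded_lt (α := m.syn)).has_min S hSne
  obtain ⟨q, hq, hb⟩ := hb₀S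
  have hle : ∀ i, D m (q i * G i) ≤ b₀ :=
    fun i => hb ▸ Finset.le_sup (f := fun i => D m (q i * G i)) (Finset.mem_univ i)
  have hDle : D m f ≤ b₀ := by
    rw [hq]; exact le_trans (D_sum_le _ _) (le_of_eq hb)
  rcases eq_or_lt_of_le hDle with hEq | hlt
  · exact ⟨q, hq, fun i => le_trans (hle i) (le_of_eq hEq.symm)⟩
  exfalso
  have hb0pos : 0 < b₀ := lt_of_le_of_lt bot_le hlt
  have huniv : (Finset.univ : Finset (Fin k)).Nonempty := by
    rcases (Finset.univ : Finset (Fin k)).eq_empty_or_nonempty with h | h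
    · rw [h] at hb
      simp only [Finset.sup_empty] at hb
      rw [← hb] at hb0pos
      simp at hb0pos
    · exact h
  obtain ⟨i₁, -, hi₁⟩ := Finset.exists_mem_eq_sup Finset.univ huniv
    (fun i => D m (q i * G i))
  set δ : σ →₀ ℕ := mdeg m (q i₁ * G i₁) with hδ_def
  have hδ : m.toSyn δ = b₀ := by rw [← hb, hi₁]
  set T : Finset (Fin k) := Finset.univ.filter (fun i => D m (q i * G i) = b₀) with hT
  have hmemT : ∀ i, i ∈ T ↔ D m (q i * G i) = b₀ := by
    intro i; simp [hT]
  have hi₁T : i₁ ∈ T := (hmemT i₁).mpr (by rw [← hb, hi₁])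
  have hqGne : ∀ i ∈ T, q i * G i ≠ 0 := by
    intro i hi h0
    have hDi := (hmemT i).mp hi
    rw [h0, D_zero] at hDi
    rw [← hDi] at hb0pos
    simp at hb0pos
  have hqne : ∀ i ∈ T, q i ≠ 0 := fun i hi => left_ne_zero_of_mul (hqGne i hi)
  have hmdegT : ∀ i ∈ T, mdeg m (q i) + mdeg m (G i) = δ := by
    intro i hi
    have h1 : D m (q i * G i) = m.toSyn δ := by rw [(hmemT i).mp hi, hδ]
    have h2 : mdeg m (q i * G i) = δ := m.toSyn.injective h1
    rw [← mdeg_mul (hqne i hi) (hG i), h2]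
  have hGile : ∀ i ∈ T, mdeg m (G i) ≤ δ := fun i hi => (hmdegT i hi) ▸ le_add_self
  have hγle : ∀ i ∈ T, mdeg m (G i) ⊔ mdeg m (G i₁) ≤ δ :=
    fun i hi => sup_le (hGile i hi) (hGile i₁ hi₁T)
  -- choose standard representations of the S-polynomials
  have hHex : ∀ i, ∃ H : Fin k → MvPolynomial σ ℚ,
      sPoly m (G i) (G i₁) = ∑ l, H l * G l ∧
      ∀ l, D m (H l * G l) ≤ D m (sPoly m (G i) (G i₁)) ∧
        (sPoly m (G i) (G i₁) = 0 → H l = 0) := by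
    intro i
    by_cases h0 : sPoly m (G i) (G i₁) = 0
    · refine ⟨fun _ => 0, by simp [h0], fun l => ⟨?_, fun _ => rfl⟩⟩
      simp only [zero_mul, D_zero]
      exact m.bot_eq_zero ▸ bot_le
    · obtain ⟨H, h1, h2⟩ := hS i i₁
      exact ⟨H, h1, fun l => ⟨h2 l, fun hc => absurd hc h0⟩⟩
  choose H hH1 hH2 using hHex
  set u : Fin k → ℚ := fun i => leadCoeff m (q i) * leadCoeff m (G i) with hu
  set q' : Fin k → MvPolynomial σ ℚ := fun l =>
    (if l ∈ T then q l - leadTerm m (q l) else q l)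
      + ∑ i ∈ T, monomial (δ - (mdeg m (G i) ⊔ mdeg m (G i₁))) (u i) * H i l with hq'
  have hsplitT : ∀ (g : Fin k → MvPolynomial σ ℚ),
      ∑ i ∈ T, g i = ∑ l, if l ∈ T then g l else 0 := by
    intro g
    rw [Finset.sum_ite_mem, Finset.univ_inter]
  -- the coefficients at δ sum to zero
  have sumU : ∑ i ∈ T, u i = 0 := by
    have h0 : f.coeff δ = 0 := coeff_eq_zero_of_D_lt (by rw [hδ]; exact hlt)
    have h1 : f.coeff δ = ∑ l, (q l * G l).coeff δ := by
      rw [hq, MvPolynomial.coeff_sum]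
    have h2 : ∀ l, (q l * G l).coeff δ = if l ∈ T then u l else 0 := by
      intro l
      by_cases hl : l ∈ T
      · rw [if_pos hl]
        have hm : mdeg m (q l * G l) = δ := by
          apply m.toSyn.injective
          show D m (q l * G l) = m.toSyn δ
          rw [(hmemT l).mp hl, hδ]
        have : (q l * G l).coeff δ = leadCoeff m (q l * G l) := by
          rw [leadCoeff, hm]
        rw [this, leadCoeff_mul (hqne l hl) (hG l)]
      · rw [if_neg hl]
        apply coeff_eq_zero_of_D_lt
        rw [hδ]
        exact lt_of_le_of_ne (hle l) (fun h => hl ((hmemT l).mpr h))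
    rw [h1] at h0
    rw [Finset.sum_congr rfl (fun l _ => h2 l), Finset.sum_ite_mem,
      Finset.univ_inter] at h0
    exact h0
  -- main identity
  have key : ∑ l, q' l * G l = f := by
    have expand : ∑ l, q' l * G l =
        (∑ l, (if l ∈ T then q l - leadTerm m (q l) else q l) * G l)
          + ∑ i ∈ T, monomial (δ - (mdeg m (G i) ⊔ mdeg m (G i₁))) (u i)
              * sPoly m (G i) (G i₁) := by
      simp only [hq', add_mul, Finset.sum_add_distrib]
      congr 1
      calc ∑ l, (∑ i ∈ T, monomial (δ - (mdeg m (G i) ⊔ mdeg m (G i₁))) (u i) * H i l) * G l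
          = ∑ l, ∑ i ∈ T, monomial (δ - (mdeg m (G i) ⊔ mdeg m (G i₁))) (u i)
              * (H i l * G l) := by
            simp only [Finset.sum_mul, mul_assoc]
        _ = ∑ i ∈ T, ∑ l, monomial (δ - (mdeg m (G i) ⊔ mdeg m (G i₁))) (u i)
              * (H i l * G l) := Finset.sum_comm
        _ = ∑ i ∈ T, monomial (δ - (mdeg m (G i) ⊔ mdeg m (G i₁))) (u i)
              * ∑ l, H i l * G l := by
            simp only [Finset.mul_sum]
        _ = _ := Finset.sum_congr rfl fun i _ => by rw [← hH1 i]
    have stepB : ∀ i ∈ T, monomial (δ - (mdeg m (G i) ⊔ mdeg m (G i₁))) (u i)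
        * sPoly m (G i) (G i₁)
        = leadTerm m (q i) * G i
          - monomial (δ - mdeg m (G i₁)) (u i * (leadCoeff m (G i₁))⁻¹) * G i₁ := by
      intro i hi
      rw [sPoly, mul_sub, ← mul_assoc, ← mul_assoc, monomial_mul, monomial_mul]
      have e1 : (δ - (mdeg m (G i) ⊔ mdeg m (G i₁)))
          + ((mdeg m (G i) ⊔ mdeg m (G i₁)) - mdeg m (G i)) = mdeg m (q i) := by
        rw [tsub_add_tsub_cancel (hγle i hi) le_sup_left]
        rw [← hmdegT i hi, add_tsub_cancel_right]
      have e2 : u i * (leadCoeff m (G i))⁻¹ = leadCoeff m (q i) := by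
        rw [hu, mul_assoc, mul_inv_cancel₀ (leadCoeff_ne_zero (hG i)), mul_one]
      have e3 : (δ - (mdeg m (G i) ⊔ mdeg m (G i₁)))
          + ((mdeg m (G i) ⊔ mdeg m (G i₁)) - mdeg m (G i₁)) = δ - mdeg m (G i₁) :=
        tsub_add_tsub_cancel (hγle i hi) le_sup_right
      rw [e1, e2, e3]
      rfl
    rw [expand, Finset.sum_congr rfl stepB, Finset.sum_sub_distrib]
    have hB : ∑ i ∈ T, monomial (δ - mdeg m (G i₁)) (u i * (leadCoeff m (G i₁))⁻¹) * G i₁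
        = (0 : MvPolynomial σ ℚ) := by
      rw [← Finset.sum_mul]
      have hmono : (∑ i ∈ T,
          (monomial (δ - mdeg m (G i₁)) (u i * (leadCoeff m (G i₁))⁻¹) : MvPolynomial σ ℚ))
          = monomial (δ - mdeg m (G i₁)) ((∑ i ∈ T, u i) * (leadCoeff m (G i₁))⁻¹) := by
        rw [Finset.sum_mul, map_sum]
      rw [hmono, sumU, zero_mul, map_zero, zero_mul]
    rw [hB, sub_zero, hsplitT fun i => leadTerm m (q i) * G i, ← Finset.sum_add_distrib, hq]
    apply Finset.sum_congr rfl
    intro l _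
    by_cases hl : l ∈ T
    · rw [if_pos hl, if_pos hl, sub_mul, sub_add_cancel]
    · rw [if_neg hl, if_neg hl, add_zero]
  -- degree bound
  have hdeg : ∀ l, D m (q' l * G l) < b₀ := by
    intro l
    have hsplit2 : q' l * G l = (if l ∈ T then q l - leadTerm m (q l) else q l) * G l
        + ∑ i ∈ T, monomial (δ - (mdeg m (G i) ⊔ mdeg m (G i₁))) (u i) * H i l * G l := by
      rw [hq', add_mul, Finset.sum_mul]
    rw [hsplit2]
    refine lt_of_le_of_lt (D_add_le _ _) (max_lt ?_ ?_)
    · by_cases hl : l ∈ T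
      · rw [if_pos hl]
        by_cases h0 : q l - leadTerm m (q l) = 0
        · rw [h0, zero_mul, D_zero]; exact hb0pos
        · calc D m ((q l - leadTerm m (q l)) * G l)
              ≤ D m (q l - leadTerm m (q l)) + D m (G l) := D_mul_le _ _
            _ < D m (q l) + D m (G l) := add_lt_add_left (D_sub_leadTerm_lt h0) _
            _ = D m (q l * G l) := by rw [D, D, D, mdeg_mul (hqne l hl) (hG l), map_add]
            _ = b₀ := (hmemT l).mp hl
      · rw [if_neg hl]
        exact lt_of_le_of_ne (hle l) (fun h => hl ((hmemT l).mpr h))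
    · refine lt_of_le_of_lt (D_sum_le T _) ?_
      rw [Finset.sup_lt_iff (show (⊥ : m.syn) < b₀ by simpa using hb0pos)]
      intro i hi
      by_cases h0 : sPoly m (G i) (G i₁) = 0
      · rw [(hH2 i l).2 h0, mul_zero, zero_mul, D_zero]; exact hb0pos
      · calc D m (monomial (δ - (mdeg m (G i) ⊔ mdeg m (G i₁))) (u i) * H i l * G l)
            ≤ m.toSyn (δ - (mdeg m (G i) ⊔ mdeg m (G i₁))) + D m (H i l * G l) := by
              rw [mul_assoc]; exact D_monomial_mul_le _ _ _
          _ ≤ m.toSyn (δ - (mdeg m (G i) ⊔ mdeg m (G i₁)))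
              + D m (sPoly m (G i) (G i₁)) := add_le_add_right ((hH2 i l).1) _
          _ < m.toSyn (δ - (mdeg m (G i) ⊔ mdeg m (G i₁)))
              + m.toSyn (mdeg m (G i) ⊔ mdeg m (G i₁)) :=
              add_lt_add_right (D_sPoly_lt (hG i) (hG i₁) h0) _
          _ = m.toSyn δ := by rw [← map_add, tsub_add_cancel_of_le (hγle i hi)]
          _ = b₀ := hδ
  have hmem : (Finset.univ.sup fun l => D m (q' l * G l)) ∈ S := ⟨q', key.symm, rfl⟩
  have hltb : (Finset.univ.sup fun l => D m (q' l * G l)) < b₀ :=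
    Finset.sup_lt_iff (show (⊥ : m.syn) < b₀ by simpa using hb0pos) |>.mpr
      (fun l _ => hdeg l)
  exact hmin _ hmem hltb

end BuchAux

open ModularGB in
/-- Buchberger's criterion. -/
theorem stmt1 {σ : Type*} (m : MonomialOrder σ) {k : ℕ}
    (G : Fin k → MvPolynomial σ ℚ) (hG : ∀ i, G i ≠ 0)
    (hS : ∀ i j, RedZero m G (sPoly m (G i) (G j))) :
    IsGroebner m G (Ideal.span (Set.range G)) := by
  classical
  constructor
  · intro i
    exact Ideal.subset_span ⟨i, rfl⟩
  · apply le_antisymm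
    · rw [Ideal.span_le]
      rintro x ⟨i, rfl⟩
      exact Ideal.subset_span ⟨G i, ⟨Ideal.subset_span ⟨i, rfl⟩, hG i⟩, rfl⟩
    · rw [LTIdeal, Ideal.span_le]
      rintro x ⟨f, ⟨hfI, hf0⟩, rfl⟩
      obtain ⟨q, hq, hdeg⟩ := BuchAux.redZero_of_mem G hG hS f hfI
      have hc : leadCoeff m f = ∑ i, (q i * G i).coeff (mdeg m f) := by
        rw [leadCoeff, hq, MvPolynomial.coeff_sum]
      have hlt : leadTerm m f
          = ∑ i, MvPolynomial.monomial (mdeg m f) ((q i * G i).coeff (mdeg m f)) := by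
        rw [leadTerm, hc, map_sum]
      rw [hlt]
      apply Ideal.sum_mem
      intro i _
      by_cases h0 : (q i * G i).coeff (mdeg m f) = 0
      · rw [h0, map_zero]; exact Ideal.zero_mem _
      · have h1 : m.toSyn (mdeg m f) ≤ BuchAux.D m (q i * G i) :=
          BuchAux.le_D_of_coeff_ne_zero h0
        have h2 : mdeg m (q i * G i) = mdeg m f :=
          m.toSyn.injective (le_antisymm (hdeg i) h1)
        have hqGne : q i * G i ≠ 0 := fun hz => h0 (by rw [hz]; simp)
        have hqne : q i ≠ 0 := left_ne_zero_of_mul hqGne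
        have h3 : (q i * G i).coeff (mdeg m f) = leadCoeff m (q i) * leadCoeff m (G i) := by
          rw [← h2]
          exact BuchAux.leadCoeff_mul hqne (hG i)
        have h4 : mdeg m f = mdeg m (q i) + mdeg m (G i) := by
          rw [← h2, BuchAux.mdeg_mul hqne (hG i)]
        rw [h3, h4]
        have h5 : (MvPolynomial.monomial (mdeg m (q i) + mdeg m (G i)))
            (leadCoeff m (q i) * leadCoeff m (G i))
            = MvPolynomial.monomial (mdeg m (q i)) (leadCoeff m (q i)) * leadTerm m (G i) := by
          rw [leadTerm, MvPolynomial.monomial_mul]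
        rw [h5]
        exact Ideal.mul_mem_left _ _ (Ideal.subset_span ⟨i, rfl⟩)
end

section
/- Rational reconstruction uniqueness: Let m > 0 and let a/b, c/d be rational numbers in lowest terms with |a|, |c| ≤ N, 0 < b, d ≤ D, where 2·N·D < m, and suppose b and d are coprime to m. If a·b⁻¹ ≡ c·d⁻¹ (mod m), then a/b = c/d. -/
open MvPolynomial
open scoped MonomialOrder

/-- Uniqueness of rational (Farey) reconstruction modulo `M`. -/
theorem stmt5 (M : ℕ) (hM : 0 < M) (a b c d N D : ℤ)
    (hab : IsCoprime a b) (hcd : IsCoprime c d)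
    (haN : |a| ≤ N) (hcN : |c| ≤ N)
    (hb : 0 < b) (hbD : b ≤ D) (hd : 0 < d) (hdD : d ≤ D)
    (hbound : 2 * N * D < (M : ℤ))
    (hbM : IsCoprime b (M : ℤ)) (hdM : IsCoprime d (M : ℤ))
    (hcong : (a : ZMod M) * (b : ZMod M)⁻¹ = (c : ZMod M) * (d : ZMod M)⁻¹) :
    (a : ℚ) / (b : ℚ) = (c : ℚ) / (d : ℚ) := by
  have hNn : (0:ℤ) ≤ N := le_trans (abs_nonneg a) haN
  -- b and d are units mod M
  obtain ⟨u, v, huv⟩ := hbM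
  obtain ⟨p, q, hpq⟩ := hdM
  have hbu : (u : ZMod M) * (b : ZMod M) = 1 := by
    have := congrArg (fun z : ℤ => (z : ZMod M)) huv
    push_cast at this; simpa using this
  have hdu : (p : ZMod M) * (d : ZMod M) = 1 := by
    have := congrArg (fun z : ℤ => (z : ZMod M)) hpq
    push_cast at this; simpa using this
  have hbi : (b : ZMod M)⁻¹ * (b : ZMod M) = 1 :=
    ZMod.inv_mul_of_unit _ (IsUnit.of_mul_eq_one _ ((mul_comm _ _).trans hbu))
  have hdi : (d : ZMod M)⁻¹ * (d : ZMod M) = 1 :=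
    ZMod.inv_mul_of_unit _ (IsUnit.of_mul_eq_one _ ((mul_comm _ _).trans hdu))
  have key : ((a * d : ℤ) : ZMod M) = ((c * b : ℤ) : ZMod M) := by
    have h1 : (a : ZMod M) * (b : ZMod M)⁻¹ * ((b : ZMod M) * (d : ZMod M))
        = (c : ZMod M) * (d : ZMod M)⁻¹ * ((b : ZMod M) * (d : ZMod M)) := by rw [hcong]
    rw [show (a : ZMod M) * (b : ZMod M)⁻¹ * ((b : ZMod M) * (d : ZMod M))
        = (a : ZMod M) * (d : ZMod M) * ((b : ZMod M)⁻¹ * (b : ZMod M)) by ring, hbi, mul_one,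
      show (c : ZMod M) * (d : ZMod M)⁻¹ * ((b : ZMod M) * (d : ZMod M))
        = (c : ZMod M) * (b : ZMod M) * ((d : ZMod M)⁻¹ * (d : ZMod M)) by ring, hdi,
      mul_one] at h1
    push_cast
    exact h1
  have hdvd : (M : ℤ) ∣ a * d - c * b := by
    have := (ZMod.intCast_eq_intCast_iff' _ _ _).mp key
    exact Int.ModEq.dvd this.symm
  have habs : |a * d - c * b| < (M : ℤ) := by
    calc |a * d - c * b| ≤ |a * d| + |c * b| := abs_sub _ _
      _ = |a| * |d| + |c| * |b| := by rw [abs_mul, abs_mul]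
      _ ≤ N * D + N * D := by
          gcongr
          · rw [abs_of_pos hd]; exact hdD
          · rw [abs_of_pos hb]; exact hbD
      _ = 2 * N * D := by ring
      _ < M := hbound
  have hz : a * d = c * b := by
    have := Int.eq_zero_of_abs_lt_dvd hdvd habs
    linarith
  rw [div_eq_div_iff (by exact_mod_cast hb.ne') (by exact_mod_cast hd.ne')]
  exact_mod_cast hz
end

section
/- If G is an inter-reduced (reduced) Gröbner basis of an ideal I ⊆ ℚ[x₁,...,xₙ] with all leading coefficients equal to 1, then G is unique: any two reduced Gröbner bases of I with monic elements for the same monomial order are equal as sets. -/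
open MvPolynomial
open scoped MonomialOrder

open ModularGB

/-- `G` (as a finite set) is a Gröbner basis of `I`. -/
def IsGroebnerSet {σ : Type*} (m : MonomialOrder σ) (G : Finset (MvPolynomial σ ℚ))
    (I : Ideal (MvPolynomial σ ℚ)) : Prop :=
  (↑G ⊆ (I : Set (MvPolynomial σ ℚ))) ∧
    Ideal.span (leadTerm m '' ↑G) = LTIdeal m I

/-- `G` is a reduced Gröbner basis of `I`: every element is monic and no monomial of an
element is divisible by the leading monomial of another element. -/
def IsReducedGroebner {σ : Type*} (m : MonomialOrder σ) (G : Finset (MvPolynomial σ ℚ))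
    (I : Ideal (MvPolynomial σ ℚ)) : Prop :=
  IsGroebnerSet m G I ∧ (∀ g ∈ G, leadCoeff m g = 1) ∧
    ∀ g ∈ G, ∀ g' ∈ G, g' ≠ g → ∀ d ∈ g.support, ¬ mdeg m g' ≤ d

section Aux

variable {σ : Type*} {m : MonomialOrder σ}

lemma aux_mdeg_mem_support {R : Type*} [CommSemiring R] {f : MvPolynomial σ R} (hf : f ≠ 0) :
    mdeg m f ∈ f.support := by
  obtain ⟨d, hd, hsup⟩ := Finset.exists_mem_eq_sup f.support
    (MvPolynomial.support_nonempty.mpr hf) (fun d => m.toSyn d)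
  rw [mdeg, hsup]
  simpa using hd

lemma aux_toSyn_le_mdeg {R : Type*} [CommSemiring R] {f : MvPolynomial σ R} {d : σ →₀ ℕ}
    (hd : d ∈ f.support) : m.toSyn d ≤ m.toSyn (mdeg m f) := by
  rw [mdeg, AddEquiv.apply_symm_apply]
  exact Finset.le_sup hd

lemma aux_leadCoeff_ne_zero {R : Type*} [CommSemiring R] {f : MvPolynomial σ R} (hf : f ≠ 0) :
    leadCoeff m f ≠ 0 :=
  MvPolynomial.mem_support_iff.mp (aux_mdeg_mem_support hf)

lemma aux_exists_mdeg_le {I : Ideal (MvPolynomial σ ℚ)} {G : Finset (MvPolynomial σ ℚ)}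
    (hspan : Ideal.span (leadTerm m '' ↑G) = LTIdeal m I)
    (hmonic : ∀ g ∈ G, leadCoeff m g = 1)
    {f : MvPolynomial σ ℚ} (hf : f ∈ I) (hf0 : f ≠ 0) :
    ∃ g ∈ G, mdeg m g ≤ mdeg m f := by
  have himg : leadTerm m '' (↑G : Set (MvPolynomial σ ℚ))
      = (fun s => MvPolynomial.monomial s (1 : ℚ)) '' (mdeg m '' (↑G : Set (MvPolynomial σ ℚ))) := by
    rw [Set.image_image]
    apply Set.image_congr
    intro g hg
    rw [leadTerm, hmonic g hg]
  have h1 : leadTerm m f ∈ Ideal.span (leadTerm m '' ↑G) := by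
    rw [hspan]
    exact Ideal.subset_span ⟨f, ⟨hf, hf0⟩, rfl⟩
  have h2 : MvPolynomial.monomial (mdeg m f) (1 : ℚ) ∈ Ideal.span (leadTerm m '' ↑G) := by
    have heq : MvPolynomial.monomial (mdeg m f) (1 : ℚ)
        = MvPolynomial.C (leadCoeff m f)⁻¹ * leadTerm m f := by
      rw [leadTerm, MvPolynomial.C_mul_monomial,
        inv_mul_cancel₀ (aux_leadCoeff_ne_zero hf0)]
    rw [heq]
    exact Ideal.mul_mem_left _ _ h1
  rw [himg, MvPolynomial.mem_ideal_span_monomial_image] at h2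
  obtain ⟨s, hs, hle⟩ := h2 (mdeg m f)
    (by simp [MvPolynomial.support_monomial])
  obtain ⟨g, hg, rfl⟩ := hs
  exact ⟨g, hg, hle⟩

lemma aux_reduced_subset {I : Ideal (MvPolynomial σ ℚ)} {G₁ G₂ : Finset (MvPolynomial σ ℚ)}
    (h₁ : IsReducedGroebner m G₁ I) (h₂ : IsReducedGroebner m G₂ I) :
    G₁ ⊆ G₂ := by
  classical
  obtain ⟨⟨hG₁I, hspan₁⟩, hmon₁, hred₁⟩ := h₁
  obtain ⟨⟨hG₂I, hspan₂⟩, hmon₂, hred₂⟩ := h₂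
  intro g₁ hg₁
  have hne₁ : g₁ ≠ 0 := by
    intro h
    have h1 := hmon₁ g₁ hg₁
    rw [h] at h1
    simp [leadCoeff] at h1
  obtain ⟨g₂, hg₂, hle₂⟩ := aux_exists_mdeg_le hspan₂ hmon₂ (hG₁I hg₁) hne₁
  have hne₂ : g₂ ≠ 0 := by
    intro h
    have h1 := hmon₂ g₂ hg₂
    rw [h] at h1
    simp [leadCoeff] at h1
  obtain ⟨g₁', hg₁', hle₁⟩ := aux_exists_mdeg_le hspan₁ hmon₁ (hG₂I hg₂) hne₂
  have heq : g₁' = g₁ := by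
    by_contra hne
    exact hred₁ g₁ hg₁ g₁' hg₁' hne (mdeg m g₁) (aux_mdeg_mem_support hne₁) (hle₁.trans hle₂)
  rw [heq] at hle₁
  have hdeq : mdeg m g₂ = mdeg m g₁ := le_antisymm hle₂ hle₁
  have hgeq : g₁ = g₂ := by
    by_contra hne
    have hh : g₁ - g₂ ∈ I := I.sub_mem (hG₁I hg₁) (hG₂I hg₂)
    have hh0 : g₁ - g₂ ≠ 0 := sub_ne_zero.mpr hne
    set d := mdeg m (g₁ - g₂) with hd
    have hdmem : d ∈ (g₁ - g₂).support := aux_mdeg_mem_support hh0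
    have hcoeff : MvPolynomial.coeff (mdeg m g₁) (g₁ - g₂) = 0 := by
      rw [MvPolynomial.coeff_sub]
      have c1 : MvPolynomial.coeff (mdeg m g₁) g₁ = 1 := hmon₁ g₁ hg₁
      have c2 : MvPolynomial.coeff (mdeg m g₁) g₂ = 1 := by
        rw [← hdeq]
        exact hmon₂ g₂ hg₂
      rw [c1, c2, sub_self]
    have hdne : d ≠ mdeg m g₁ := by
      intro h
      rw [h] at hdmem
      exact MvPolynomial.mem_support_iff.mp hdmem hcoeff
    have hdsup : d ∈ g₁.support ∪ g₂.support := by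
      by_contra h
      simp only [Finset.mem_union, not_or, MvPolynomial.notMem_support_iff] at h
      have h1 := MvPolynomial.mem_support_iff.mp hdmem
      rw [MvPolynomial.coeff_sub, h.1, h.2, sub_self] at h1
      exact h1 rfl
    obtain ⟨g₂', hg₂', hle₂'⟩ := aux_exists_mdeg_le hspan₂ hmon₂ hh hh0
    obtain ⟨g₁'', hg₁'', hle₁''⟩ := aux_exists_mdeg_le hspan₁ hmon₁ hh hh0
    rcases Finset.mem_union.mp hdsup with hcase | hcase
    · have hneq : g₁'' ≠ g₁ := by
        intro h
        apply hdne
        have ha : m.toSyn (mdeg m g₁) ≤ m.toSyn d := m.toSyn_monotone (h ▸ hle₁'')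
        have hb : m.toSyn d ≤ m.toSyn (mdeg m g₁) := aux_toSyn_le_mdeg hcase
        exact m.toSyn.injective (le_antisymm hb ha)
      exact hred₁ g₁ hg₁ g₁'' hg₁'' hneq d hcase hle₁''
    · have hneq : g₂' ≠ g₂ := by
        intro h
        apply hdne
        rw [← hdeq]
        have ha : m.toSyn (mdeg m g₂) ≤ m.toSyn d := m.toSyn_monotone (h ▸ hle₂')
        have hb : m.toSyn d ≤ m.toSyn (mdeg m g₂) := aux_toSyn_le_mdeg hcase
        exact m.toSyn.injective (le_antisymm hb ha)
      exact hred₂ g₂ hg₂ g₂' hg₂' hneq d hcase hle₂'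
  rw [hgeq]
  exact hg₂

end Aux

/-- Uniqueness of the reduced (monic, inter-reduced) Gröbner basis. -/
theorem stmt12 {σ : Type*} (m : MonomialOrder σ)
    (I : Ideal (MvPolynomial σ ℚ)) (G₁ G₂ : Finset (MvPolynomial σ ℚ))
    (h₁ : IsReducedGroebner m G₁ I) (h₂ : IsReducedGroebner m G₂ I) :
    G₁ = G₂ := by
  exact Finset.Subset.antisymm (aux_reduced_subset h₁ h₂) (aux_reduced_subset h₂ h₁)
end

section
/- Buchberger's first criterion: If f, g ∈ ℚ[x₁,...,xₙ] are nonzero and their leading monomials are coprime (lcm(lm(f), lm(g)) = lm(f)·lm(g)), then the S-polynomial S(f,g) reduces to 0 modulo {f, g}. -/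
open MvPolynomial
open scoped MonomialOrder

namespace StmtAux
open ModularGB
variable {σ : Type*} (m : MonomialOrder σ)

lemma toSyn_mdeg (f : MvPolynomial σ ℚ) :
    m.toSyn (mdeg m f) = f.support.sup fun d => m.toSyn d := by
  simp [mdeg]

lemma le_mdeg_of_mem {f : MvPolynomial σ ℚ} {d : σ →₀ ℕ} (h : d ∈ f.support) :
    m.toSyn d ≤ m.toSyn (mdeg m f) := by
  rw [toSyn_mdeg]; exact Finset.le_sup h

lemma coeff_eq_zero_of_mdeg_lt {f : MvPolynomial σ ℚ} {d : σ →₀ ℕ}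
    (h : m.toSyn (mdeg m f) < m.toSyn d) : f.coeff d = 0 := by
  by_contra hc
  exact absurd (le_mdeg_of_mem m (MvPolynomial.mem_support_iff.mpr hc)) (not_le.mpr h)

lemma mdeg_mem_support {f : MvPolynomial σ ℚ} (hf : f ≠ 0) : mdeg m f ∈ f.support := by
  obtain ⟨b, hb, hbs⟩ := Finset.exists_mem_eq_sup f.support
    (MvPolynomial.support_nonempty.mpr hf) (fun d => m.toSyn d)
  have : mdeg m f = b := by rw [mdeg, hbs]; exact m.toSyn.symm_apply_apply b
  rwa [this]

lemma leadCoeff_ne_zero {f : MvPolynomial σ ℚ} (hf : f ≠ 0) : leadCoeff m f ≠ 0 :=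
  MvPolynomial.mem_support_iff.mp (mdeg_mem_support m hf)

lemma mdeg_zero : mdeg m (0 : MvPolynomial σ ℚ) = 0 := by
  simp [mdeg]

lemma mdeg_mul_le (p q : MvPolynomial σ ℚ) :
    m.toSyn (mdeg m (p * q)) ≤ m.toSyn (mdeg m p) + m.toSyn (mdeg m q) := by
  classical
  rw [toSyn_mdeg]
  apply Finset.sup_le
  intro d hd
  have hmem := MvPolynomial.support_mul p q hd
  rw [Finset.mem_add] at hmem
  obtain ⟨u, hu, v, hv, rfl⟩ := hmem
  rw [map_add]
  exact add_le_add (le_mdeg_of_mem m hu) (le_mdeg_of_mem m hv)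

lemma coeff_mul_mdeg_add (p q : MvPolynomial σ ℚ) :
    (p * q).coeff (mdeg m p + mdeg m q) = leadCoeff m p * leadCoeff m q := by
  classical
  rw [MvPolynomial.coeff_mul]
  rw [Finset.sum_eq_single (mdeg m p, mdeg m q)]
  · rfl
  · rintro ⟨u, v⟩ hmem hne
    rw [Finset.HasAntidiagonal.mem_antidiagonal] at hmem
    have hsyn : m.toSyn u + m.toSyn v = m.toSyn (mdeg m p) + m.toSyn (mdeg m q) := by
      rw [← map_add, ← map_add, hmem]
    rcases lt_trichotomy (m.toSyn u) (m.toSyn (mdeg m p)) with h | h | h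
    · have hv : m.toSyn (mdeg m q) < m.toSyn v := by
        by_contra hle
        push_neg at hle
        exact absurd hsyn (ne_of_lt (add_lt_add_of_lt_of_le h hle))
      simp only [coeff_eq_zero_of_mdeg_lt m hv, mul_zero]
    · have hu : u = mdeg m p := m.toSyn.injective h
      have hv : v = mdeg m q := by
        subst hu
        exact add_left_cancel hmem
      exact absurd (Prod.ext hu hv) hne
    · simp only [coeff_eq_zero_of_mdeg_lt m h, zero_mul]
  · intro habs
    rw [Finset.HasAntidiagonal.mem_antidiagonal] at habs
    exact absurd rfl habs

lemma mdeg_mul {p q : MvPolynomial σ ℚ} (hp : p ≠ 0) (hq : q ≠ 0) :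
    mdeg m (p * q) = mdeg m p + mdeg m q := by
  apply m.toSyn.injective
  apply le_antisymm
  · rw [map_add]; exact mdeg_mul_le m p q
  · apply le_mdeg_of_mem
    rw [MvPolynomial.mem_support_iff, coeff_mul_mdeg_add]
    exact mul_ne_zero (leadCoeff_ne_zero m hp) (leadCoeff_ne_zero m hq)

lemma mdeg_neg (p : MvPolynomial σ ℚ) : mdeg m (-p) = mdeg m p := by
  simp [mdeg]

lemma coeff_leadTerm_self (f : MvPolynomial σ ℚ) :
    (leadTerm m f).coeff (mdeg m f) = leadCoeff m f := by
  classical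
  rw [leadTerm, MvPolynomial.coeff_monomial, if_pos rfl]

lemma coeff_leadTerm_ne {f : MvPolynomial σ ℚ} {d : σ →₀ ℕ} (h : mdeg m f ≠ d) :
    (leadTerm m f).coeff d = 0 := by
  classical
  rw [leadTerm, MvPolynomial.coeff_monomial, if_neg h]

lemma tail_mdeg_lt {f : MvPolynomial σ ℚ} (hf : f ≠ 0)
    (ht : f - leadTerm m f ≠ 0) :
    m.toSyn (mdeg m (f - leadTerm m f)) < m.toSyn (mdeg m f) := by
  classical
  have hmem := mdeg_mem_support m ht
  have hne : mdeg m (f - leadTerm m f) ≠ mdeg m f := by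
    intro h
    apply MvPolynomial.mem_support_iff.mp hmem
    rw [h, MvPolynomial.coeff_sub, coeff_leadTerm_self, leadCoeff, sub_self]
  have hco : (f - leadTerm m f).coeff (mdeg m (f - leadTerm m f)) ≠ 0 :=
    MvPolynomial.mem_support_iff.mp hmem
  rw [MvPolynomial.coeff_sub, coeff_leadTerm_ne m (Ne.symm hne), sub_zero] at hco
  have hle := le_mdeg_of_mem m (MvPolynomial.mem_support_iff.mpr hco)
  exact lt_of_le_of_ne hle (fun h => hne (m.toSyn.injective h))

lemma le_mdeg_sub_left {A B : MvPolynomial σ ℚ} (hA : A ≠ 0)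
    (h : m.toSyn (mdeg m B) < m.toSyn (mdeg m A)) :
    m.toSyn (mdeg m A) ≤ m.toSyn (mdeg m (A - B)) := by
  apply le_mdeg_of_mem
  rw [MvPolynomial.mem_support_iff, MvPolynomial.coeff_sub,
      coeff_eq_zero_of_mdeg_lt m h, sub_zero]
  exact leadCoeff_ne_zero m hA

lemma le_mdeg_sub_right {A B : MvPolynomial σ ℚ} (hB : B ≠ 0)
    (h : m.toSyn (mdeg m A) < m.toSyn (mdeg m B)) :
    m.toSyn (mdeg m B) ≤ m.toSyn (mdeg m (A - B)) := by
  apply le_mdeg_of_mem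
  rw [MvPolynomial.mem_support_iff, MvPolynomial.coeff_sub,
      coeff_eq_zero_of_mdeg_lt m h, zero_sub, neg_ne_zero]
  exact leadCoeff_ne_zero m hB

lemma mdeg_C_mul {c : ℚ} (hc : c ≠ 0) (p : MvPolynomial σ ℚ) :
    mdeg m (MvPolynomial.C c * p) = mdeg m p := by
  have hsupp : (MvPolynomial.C c * p).support = p.support := by
    ext d
    simp [MvPolynomial.mem_support_iff, MvPolynomial.coeff_C_mul, hc]
  rw [mdeg, hsupp, mdeg]

lemma key_ne {f g : MvPolynomial σ ℚ} (hf : f ≠ 0) (_hg : g ≠ 0)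
    (hcop : mdeg m f ⊔ mdeg m g = mdeg m f + mdeg m g)
    (htf : f - leadTerm m f ≠ 0) (_htg : g - leadTerm m g ≠ 0) :
    mdeg m (f - leadTerm m f) + mdeg m g ≠ mdeg m (g - leadTerm m g) + mdeg m f := by
  intro h
  have hdisj : ∀ x, mdeg m f x = 0 ∨ mdeg m g x = 0 := by
    intro x
    have hx : (mdeg m f ⊔ mdeg m g) x = (mdeg m f + mdeg m g) x := by rw [hcop]
    rw [Finsupp.sup_apply, Finsupp.add_apply] at hx
    rcases le_total (mdeg m f x) (mdeg m g x) with h' | h' <;>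
      simp [max_eq_right, max_eq_left, h'] at hx <;> omega
  have hle : mdeg m f ≤ mdeg m (f - leadTerm m f) := by
    rw [Finsupp.le_def]
    intro x
    have hx : mdeg m (f - leadTerm m f) x + mdeg m g x
        = mdeg m (g - leadTerm m g) x + mdeg m f x := by
      rw [← Finsupp.add_apply, ← Finsupp.add_apply, h]
    rcases hdisj x with h0 | h0 <;> omega
  exact absurd (lt_of_le_of_lt (m.toSyn_monotone hle) (tail_mdeg_lt m hf htf)) (lt_irrefl _)

end StmtAux

open StmtAux in
open ModularGB in
/-- Buchberger's first criterion: coprime leading monomials give an S-polynomial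
reducing to zero modulo `{f, g}`. -/
theorem stmt17 {σ : Type*} (m : MonomialOrder σ) (f g : MvPolynomial σ ℚ)
    (hf : f ≠ 0) (hg : g ≠ 0)
    (hcop : mdeg m f ⊔ mdeg m g = mdeg m f + mdeg m g) :
    RedZero m ![f, g] (sPoly m f g) := by
  classical
  have hcf := leadCoeff_ne_zero m hf
  have hcg := leadCoeff_ne_zero m hg
  set c : ℚ := (leadCoeff m f)⁻¹ * (leadCoeff m g)⁻¹ with hcdef
  have hc : c ≠ 0 := mul_ne_zero (inv_ne_zero hcf) (inv_ne_zero hcg)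
  set tf := f - leadTerm m f with htf
  set tg := g - leadTerm m g with htg
  have hS : sPoly m f g = C c * tf * g - C c * tg * f := by
    rw [sPoly, hcop, add_tsub_cancel_left, add_tsub_cancel_right]
    have h1 : (monomial (mdeg m g) (leadCoeff m f)⁻¹ : MvPolynomial σ ℚ)
        = C c * leadTerm m g := by
      rw [leadTerm, MvPolynomial.C_mul_monomial]
      congr 1
      rw [hcdef, mul_assoc, inv_mul_cancel₀ hcg, mul_one]
    have h2 : (monomial (mdeg m f) (leadCoeff m g)⁻¹ : MvPolynomial σ ℚ)
        = C c * leadTerm m f := by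
      rw [leadTerm, MvPolynomial.C_mul_monomial]
      congr 1
      rw [hcdef, mul_comm ((leadCoeff m f)⁻¹), mul_assoc, inv_mul_cancel₀ hcf, mul_one]
    have h3 : leadTerm m g = g - tg := by rw [htg]; ring
    have h4 : leadTerm m f = f - tf := by rw [htf]; ring
    rw [h1, h2, h3, h4]; ring
  have h0le : ∀ a : m.syn, 0 ≤ a := fun a => m.bot_eq_zero ▸ bot_le
  have hmain :
      m.toSyn (mdeg m (C c * tg * f)) ≤ m.toSyn (mdeg m (C c * tf * g - C c * tg * f)) ∧
      m.toSyn (mdeg m (C c * tf * g)) ≤ m.toSyn (mdeg m (C c * tf * g - C c * tg * f)) := by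
    by_cases h0f : tf = 0
    · by_cases h0g : tg = 0
      · constructor <;> simp [h0f, h0g, mdeg_zero]
      · rw [h0f]
        constructor
        · rw [mul_zero, zero_mul, zero_sub, mdeg_neg]
        · rw [mul_zero, zero_mul]
          rw [mdeg_zero, map_zero]
          exact h0le _
    · by_cases h0g : tg = 0
      · rw [h0g]
        constructor
        · rw [mul_zero, zero_mul]
          rw [mdeg_zero, map_zero]
          exact h0le _
        · rw [mul_zero, zero_mul, sub_zero]
      · have hC : (C c : MvPolynomial σ ℚ) ≠ 0 := by
          simpa using hc
        have hA0 : C c * tf * g ≠ 0 := mul_ne_zero (mul_ne_zero hC h0f) hg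
        have hB0 : C c * tg * f ≠ 0 := mul_ne_zero (mul_ne_zero hC h0g) hf
        have hmA : mdeg m (C c * tf * g) = mdeg m tf + mdeg m g := by
          rw [mul_assoc, mdeg_C_mul m hc, mdeg_mul m h0f hg]
        have hmB : mdeg m (C c * tg * f) = mdeg m tg + mdeg m f := by
          rw [mul_assoc, mdeg_C_mul m hc, mdeg_mul m h0g hf]
        have hne : m.toSyn (mdeg m (C c * tf * g)) ≠ m.toSyn (mdeg m (C c * tg * f)) := by
          rw [hmA, hmB]
          intro h
          exact key_ne m hf hg hcop h0f h0g (m.toSyn.injective h)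
        rcases hne.lt_or_gt with h | h
        · have hB := le_mdeg_sub_right m hB0 h
          exact ⟨hB, le_trans h.le hB⟩
        · have hA := le_mdeg_sub_left m hA0 h
          exact ⟨le_trans h.le hA, hA⟩
  refine ⟨![-(C c * tg), C c * tf], ?_, ?_⟩
  · rw [hS, Fin.sum_univ_two]
    simp only [Matrix.cons_val_zero, Matrix.cons_val_one, Matrix.head_cons]
    ring
  · intro i
    rw [hS]
    have hnegB : -(C c * tg) * f = -(C c * tg * f) := by ring
    fin_cases i <;>
      simp only [Fin.zero_eta, Fin.mk_one, Matrix.cons_val_zero, Matrix.cons_val_one,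
        Matrix.head_cons]
    · rw [hnegB, mdeg_neg]
      exact hmain.1
    · exact hmain.2
end
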